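/- Let u ⊆ {1,…,s} be nonempty and k ∈ {0,1,…,m−1}^{|u|}. Then Γ_{u,k} = 2^{m − rank(C_{u,k})} if and only if the vector Σ_{j∈u} C_j(k_j+1,:) ∈ F₂^m (the sum over F₂ of the (k_j+1)-st rows of the C_j for j ∈ u) lies in the row space of C_{u,k} over F₂. -/

import Mathlib

open Finset

noncomputable section

/-- The bit vector `i⃗ ∈ F₂^m` of the integer `i = Σ_{ℓ=1}^m i_ℓ 2^{ℓ-1}`. -/
def bvec (m : ℕ) (i : ℕ) : Fin m → ZMod 2 :=
  fun ℓ => if Nat.testBit i ℓ.1 then 1 else 0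

/-- The `(r+1)`-st row (i.e. `r` with 0-indexing) of an `m × m` matrix over `F₂`,
as a vector in `F₂^m`; junk value `0` if `r ≥ m` (never used under the hypotheses below). -/
def rowAt (m : ℕ) (A : Matrix (Fin m) (Fin m) (ZMod 2)) (r : ℕ) : Fin m → ZMod 2 :=
  fun ℓ => if h : r < m then A ⟨r, h⟩ ℓ else 0

/-- The stacked matrix `C_{u,k}`: for each `j ∈ u`, the first `k j` rows of `C j`. -/
def stack {m s : ℕ} (C : Fin s → Matrix (Fin m) (Fin m) (ZMod 2))
    (u : Finset (Fin s)) (k : Fin s → ℕ) :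
    Matrix ((j : {x // x ∈ u}) × Fin (k j.1)) (Fin m) (ZMod 2) :=
  fun p => rowAt m (C p.1.1) p.2.1

/-- `∇C_{u,k}`: the matrix whose rows are the `(k j + 1)`-st rows (1-indexed) of `C j`, `j ∈ u`. -/
def grad {m s : ℕ} (C : Fin s → Matrix (Fin m) (Fin m) (ZMod 2))
    (u : Finset (Fin s)) (k : Fin s → ℕ) :
    Matrix {x // x ∈ u} (Fin m) (ZMod 2) :=
  fun j => rowAt m (C j.1) (k j.1)

/-- The coordinate `x_{ij} ∈ [0,1)` of the digital net generated by `C₁,…,C_s`: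
`x_{ij} = Σ_{ℓ=1}^m y_ℓ 2^{-ℓ}` where `y = C_j · i⃗` over `F₂`. -/
def pt {m s : ℕ} (C : Fin s → Matrix (Fin m) (Fin m) (ZMod 2)) (i : ℕ) (j : Fin s) : ℝ :=
  ∑ ℓ : Fin m, (((C j).mulVec (bvec m i) ℓ).val : ℝ) / 2 ^ (ℓ.1 + 1)

/-- The factor `N`: with `M(x,x') = max{k ∈ ℕ₀ : ⌊2^k x⌋ = ⌊2^k x'⌋}` (the number of matching
leading binary digits), `Nf x x' c` equals `1` if `M(x,x') > c` (equivalently the first `c+1`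
binary digits match), `-1` if `M(x,x') = c` (the first `c` digits match but not `c+1`), and
`0` if `M(x,x') < c`. -/
def Nf (x x' : ℝ) (c : ℕ) : ℤ :=
  if ⌊(2:ℝ) ^ (c + 1) * x⌋ = ⌊(2:ℝ) ^ (c + 1) * x'⌋ then 1
  else if ⌊(2:ℝ) ^ c * x⌋ = ⌊(2:ℝ) ^ c * x'⌋ then -1
  else 0

/-- The gain coefficient `Γ_{u,k} = 2^{-m} Σ_{i=0}^{2^m-1} Σ_{i'=0}^{2^m-1} ∏_{j∈u} N_{i,i',j}`. -/
def Gam {m s : ℕ} (C : Fin s → Matrix (Fin m) (Fin m) (ZMod 2))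
    (u : Finset (Fin s)) (k : Fin s → ℕ) : ℚ :=
  (2 ^ m : ℚ)⁻¹ * ∑ i ∈ Finset.range (2 ^ m), ∑ i' ∈ Finset.range (2 ^ m),
      ∏ j ∈ u, (Nf (pt C i j) (pt C i' j) (k j) : ℚ)

namespace GainAux
open Matrix

variable {m : ℕ}

lemma zmod2_cases (a : ZMod 2) : a = 0 ∨ a = 1 := by revert a; decide

lemma zmod2_add_eq_zero_iff (a b : ZMod 2) : a + b = 0 ↔ a = b := by revert a b; decide

def natOf {m : ℕ} (v : Fin m → ZMod 2) : ℕ := ∑ ℓ : Fin m, (v ℓ).val * 2 ^ ℓ.1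

lemma sum_two_pow (n : ℕ) : ∑ i ∈ Finset.range n, 2 ^ i = 2 ^ n - 1 := by
  induction n with
  | zero => rfl
  | succ n ih =>
    rw [Finset.sum_range_succ, ih]
    have := Nat.one_le_two_pow (n := n)
    rw [pow_succ]; omega

lemma natOf_lt (v : Fin m → ZMod 2) : natOf v < 2 ^ m := by
  have h : natOf v ≤ ∑ ℓ : Fin m, 2 ^ ℓ.1 := by
    apply Finset.sum_le_sum
    intro ℓ _
    have := (v ℓ).val_lt
    calc (v ℓ).val * 2 ^ ℓ.1 ≤ 1 * 2 ^ ℓ.1 := Nat.mul_le_mul_right _ (by omega)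
    _ = 2 ^ ℓ.1 := one_mul _
  have h2 : ∑ ℓ : Fin m, 2 ^ ℓ.1 = 2 ^ m - 1 := by
    rw [Fin.sum_univ_eq_sum_range (fun i => 2 ^ i), sum_two_pow]
  have := Nat.one_le_two_pow (n := m)
  omega

lemma natOf_succ {n : ℕ} (v : Fin (n + 1) → ZMod 2) :
    natOf v = (v 0).val + 2 * natOf (fun ℓ : Fin n => v ℓ.succ) := by
  rw [natOf, Fin.sum_univ_succ, natOf, Finset.mul_sum]
  simp only [Fin.val_zero, pow_zero, mul_one, Fin.val_succ]
  congr 1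
  refine Finset.sum_congr rfl fun ℓ _ => ?_
  ring

lemma testBit_natOf (v : Fin m → ZMod 2) (p : ℕ) (hp : p < m) :
    (natOf v).testBit p = decide (v ⟨p, hp⟩ = 1) := by
  induction m generalizing p with
  | zero => omega
  | succ n ih =>
    have hval := (v 0).val_lt
    rw [natOf_succ]
    cases p with
    | zero =>
      rw [Nat.testBit_zero]
      have h1 : ((v 0).val + 2 * natOf fun ℓ : Fin n => v ℓ.succ) % 2 = (v 0).val := by
        omega
      rw [h1]
      rcases zmod2_cases (v 0) with h | h <;> simp [h, ZMod.val_one]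
    | succ p =>
      rw [Nat.testBit_add_one]
      have h1 : ((v 0).val + 2 * natOf fun ℓ : Fin n => v ℓ.succ) / 2
          = natOf fun ℓ : Fin n => v ℓ.succ := by omega
      rw [h1, ih (fun ℓ => v ℓ.succ) p (by omega)]
      congr 1

lemma bvec_natOf (v : Fin m → ZMod 2) : bvec m (natOf v) = v := by
  funext ℓ
  rw [bvec]
  have := testBit_natOf v ℓ.1 ℓ.2
  rcases zmod2_cases (v ℓ) with h | h <;>
    simp only [Fin.eta, h, decide_eq_true_eq] at this <;> simp [this, h]

lemma natOf_bvec {i : ℕ} (h : i < 2 ^ m) : natOf (bvec m i) = i := by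
  apply Nat.eq_of_testBit_eq
  intro p
  by_cases hp : p < m
  · rw [testBit_natOf _ p hp]
    simp only [bvec]
    rcases Bool.eq_false_or_eq_true (i.testBit p) with hb | hb <;> simp only [hb] <;> decide
  · rw [Nat.testBit_lt_two_pow, Nat.testBit_lt_two_pow]
    · exact lt_of_lt_of_le h (Nat.pow_le_pow_right (by norm_num) (by omega))
    · exact lt_of_lt_of_le (natOf_lt _) (Nat.pow_le_pow_right (by norm_num) (by omega))

lemma bvec_xor (i i' : ℕ) : bvec m (i ^^^ i') = bvec m i + bvec m i' := by
  funext ℓ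
  simp only [bvec, Pi.add_apply, Nat.testBit_xor]
  cases h1 : i.testBit ℓ.1 <;> cases h2 : i'.testBit ℓ.1 <;> simp <;> decide


def realOf {m : ℕ} (v : Fin m → ZMod 2) : ℝ := ∑ ℓ : Fin m, ((v ℓ).val : ℝ) / 2 ^ (ℓ.1 + 1)

lemma realOf_eq (v : Fin m → ZMod 2) :
    realOf v = (natOf (v ∘ Fin.rev) : ℝ) / 2 ^ m := by
  rw [realOf, natOf]
  rw [Fintype.sum_equiv (Fin.revPerm (n := m))
    (fun ℓ => ((v ∘ Fin.rev) ℓ).val * 2 ^ ℓ.1)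
    (fun ℓ => (v ℓ).val * 2 ^ (Fin.rev ℓ).1)
    (fun ℓ => by simp [Fin.revPerm])]
  push_cast
  rw [Finset.sum_div]
  refine Finset.sum_congr rfl fun ℓ _ => ?_
  have hrev : (Fin.rev ℓ).1 = m - (ℓ.1 + 1) := rfl
  have hm2 : (2:ℝ) ^ m = 2 ^ (m - (ℓ.1 + 1)) * 2 ^ (ℓ.1 + 1) := by
    rw [← pow_add]; congr 1; have := ℓ.2; omega
  rw [hrev, div_eq_div_iff (by positivity) (by positivity), mul_assoc, ← pow_add]
  congr 2
  have := ℓ.2; omega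

lemma floor_realOf (v : Fin m → ZMod 2) (c : ℕ) (hc : c ≤ m) :
    ⌊(2:ℝ) ^ c * realOf v⌋ = ((natOf (v ∘ Fin.rev) / 2 ^ (m - c) : ℕ) : ℤ) := by
  rw [realOf_eq]
  set n := natOf (v ∘ Fin.rev) with hn
  have h1 : (2:ℝ) ^ c * ((n : ℝ) / 2 ^ m) = (n : ℝ) / 2 ^ (m - c) := by
    rw [← mul_div_assoc, div_eq_div_iff (by positivity) (by positivity),
      mul_comm ((2:ℝ) ^ c) (n : ℝ), mul_assoc, ← pow_add]
    congr 2
    omega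
  rw [h1]
  have h0 : (0:ℝ) ≤ (n : ℝ) / 2 ^ (m - c) := by positivity
  rw [← Int.natCast_floor_eq_floor h0]
  congr 1
  have hcast : (2:ℝ) ^ (m - c) = ((2 ^ (m - c) : ℕ) : ℝ) := by push_cast; ring
  rw [hcast, Nat.floor_div_eq_div]

lemma floor_eq_iff_bits (v v' : Fin m → ZMod 2) (c : ℕ) (hc : c ≤ m) :
    ⌊(2:ℝ) ^ c * realOf v⌋ = ⌊(2:ℝ) ^ c * realOf v'⌋ ↔
      ∀ ℓ : Fin m, ℓ.1 < c → v ℓ = v' ℓ := by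
  rw [floor_realOf v c hc, floor_realOf v' c hc, Int.natCast_inj]
  rw [← Nat.shiftRight_eq_div_pow, ← Nat.shiftRight_eq_div_pow]
  constructor
  · intro h ℓ hℓ
    have hb := congrArg (fun x => Nat.testBit x (c - 1 - ℓ.1)) h
    simp only [Nat.testBit_shiftRight] at hb
    set p := (m - c) + (c - 1 - ℓ.1) with hp
    have hpm : p < m := by have := ℓ.2; omega
    rw [testBit_natOf _ p hpm, testBit_natOf _ p hpm] at hb
    have hrev : Fin.rev (⟨p, hpm⟩ : Fin m) = ℓ := by
      ext
      show m - (p + 1) = ℓ.1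
      have := ℓ.2; omega
    simp only [Function.comp_apply, hrev, decide_eq_decide] at hb
    rcases zmod2_cases (v ℓ) with h1 | h1 <;> rcases zmod2_cases (v' ℓ) with h2 | h2 <;>
      simp [h1, h2] at hb ⊢
  · intro h
    apply Nat.eq_of_testBit_eq
    intro t
    rw [Nat.testBit_shiftRight, Nat.testBit_shiftRight]
    by_cases hpm : (m - c) + t < m
    · rw [testBit_natOf _ _ hpm, testBit_natOf _ _ hpm]
      have hlt : (Fin.rev (⟨(m - c) + t, hpm⟩ : Fin m)).1 < c := by
        show m - ((m - c) + t + 1) < c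
        omega
      have := h _ hlt
      simp only [Function.comp_apply, this]
    · rw [Nat.testBit_lt_two_pow, Nat.testBit_lt_two_pow]
      · exact lt_of_lt_of_le (natOf_lt _) (Nat.pow_le_pow_right (by norm_num) (by omega))
      · exact lt_of_lt_of_le (natOf_lt _) (Nat.pow_le_pow_right (by norm_num) (by omega))


open Matrix in
lemma sum_dot {α : Type*} (t : Finset α) (f : α → Fin m → ZMod 2) (d : Fin m → ZMod 2) :
    (∑ j ∈ t, f j) ⬝ᵥ d = ∑ j ∈ t, f j ⬝ᵥ d := by
  induction t using Finset.cons_induction with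
  | empty => simp [zero_dotProduct]
  | cons a s ha ih =>
    rw [Finset.sum_cons, Finset.sum_cons, add_dotProduct, ih]

def chi (a : ZMod 2) : ℚ := if a = 0 then 1 else -1

lemma chi_add (a b : ZMod 2) : chi (a + b) = chi a * chi b := by
  have h2 : (1 + 1 : ZMod 2) = 0 := by decide
  rcases zmod2_cases a with h | h <;> rcases zmod2_cases b with h' | h' <;>
    simp [h, h', h2, chi]

lemma chi_sum {α : Type*} (t : Finset α) (f : α → ZMod 2) :
    chi (∑ j ∈ t, f j) = ∏ j ∈ t, chi (f j) := by
  induction t using Finset.cons_induction with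
  | empty => simp [chi]
  | cons a s ha ih => rw [Finset.sum_cons, Finset.prod_cons, chi_add, ih]

lemma Nf_eq (y y' : Fin m → ZMod 2) (c : ℕ) (hc : c < m) :
    ((Nf (realOf y) (realOf y') c : ℚ)) =
      (if ∀ ℓ : Fin m, ℓ.1 < c → y ℓ + y' ℓ = 0 then 1 else 0)
        * (if y ⟨c, hc⟩ + y' ⟨c, hc⟩ = 0 then 1 else -1) := by
  rw [Nf]
  have h1 := floor_eq_iff_bits y y' (c + 1) (by omega)
  have h2 := floor_eq_iff_bits y y' c (by omega)
  by_cases H1 : ∀ ℓ : Fin m, ℓ.1 < c + 1 → y ℓ = y' ℓ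
  · have hx : ∀ ℓ : Fin m, ℓ.1 < c → y ℓ + y' ℓ = 0 :=
      fun ℓ hℓ => (zmod2_add_eq_zero_iff _ _).mpr (H1 ℓ (by omega))
    have hy : y ⟨c, hc⟩ + y' ⟨c, hc⟩ = 0 :=
      (zmod2_add_eq_zero_iff _ _).mpr (H1 ⟨c, hc⟩ (Nat.lt_succ_self c))
    rw [if_pos (h1.mpr H1), if_pos hx, if_pos hy]
    norm_num
  · have hA : ¬ (⌊(2:ℝ) ^ (c + 1) * realOf y⌋ = ⌊(2:ℝ) ^ (c + 1) * realOf y'⌋) :=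
      fun h => H1 (h1.mp h)
    rw [if_neg hA]
    by_cases H2 : ∀ ℓ : Fin m, ℓ.1 < c → y ℓ = y' ℓ
    · have hx : ∀ ℓ : Fin m, ℓ.1 < c → y ℓ + y' ℓ = 0 :=
        fun ℓ hℓ => (zmod2_add_eq_zero_iff _ _).mpr (H2 ℓ hℓ)
      have hy : ¬ (y ⟨c, hc⟩ + y' ⟨c, hc⟩ = 0) := by
        intro h0
        apply H1
        intro ℓ hℓ
        rcases Nat.lt_or_ge ℓ.1 c with hl | hl
        · exact H2 ℓ hl
        · have hℓc : ℓ = ⟨c, hc⟩ := Fin.ext (show ℓ.1 = c by omega)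
          rw [hℓc]
          exact (zmod2_add_eq_zero_iff _ _).mp h0
      rw [if_pos (h2.mpr H2), if_pos hx, if_neg hy]
      norm_num
    · have hB : ¬ (⌊(2:ℝ) ^ c * realOf y⌋ = ⌊(2:ℝ) ^ c * realOf y'⌋) :=
        fun h => H2 (h2.mp h)
      have hx : ¬ ∀ ℓ : Fin m, ℓ.1 < c → y ℓ + y' ℓ = 0 :=
        fun h => H2 fun ℓ hℓ => (zmod2_add_eq_zero_iff _ _).mp (h ℓ hℓ)
      rw [if_neg hB, if_neg hx]
      norm_num

variable {s : ℕ}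

lemma Nf_pt (C : Fin s → Matrix (Fin m) (Fin m) (ZMod 2)) (i i' : ℕ) (j : Fin s)
    (c : ℕ) (hc : c < m) :
    ((Nf (pt C i j) (pt C i' j) c : ℚ)) =
      (if ∀ ℓ : Fin m, ℓ.1 < c → (C j).mulVec (bvec m i + bvec m i') ℓ = 0 then 1 else 0)
        * chi (rowAt m (C j) c ⬝ᵥ (bvec m i + bvec m i')) := by
  have hpt : pt C i j = realOf ((C j).mulVec (bvec m i)) := rfl
  have hpt' : pt C i' j = realOf ((C j).mulVec (bvec m i')) := rfl
  rw [hpt, hpt', Nf_eq _ _ c hc]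
  have hmv : ∀ ℓ : Fin m,
      (C j).mulVec (bvec m i) ℓ + (C j).mulVec (bvec m i') ℓ
        = (C j).mulVec (bvec m i + bvec m i') ℓ := by
    intro ℓ
    rw [Matrix.mulVec_add]
    rfl
  congr 1
  · apply if_congr _ rfl rfl
    constructor
    · intro h ℓ hℓ
      rw [← hmv ℓ]
      exact h ℓ hℓ
    · intro h ℓ hℓ
      rw [hmv ℓ]
      exact h ℓ hℓ
  · have hrow : rowAt m (C j) c ⬝ᵥ (bvec m i + bvec m i')
        = (C j).mulVec (bvec m i + bvec m i') ⟨c, hc⟩ := by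
      show rowAt m (C j) c ⬝ᵥ _ = (C j) ⟨c, hc⟩ ⬝ᵥ _
      congr 1
      funext ℓ
      simp [rowAt, hc]
    rw [chi, hrow, ← hmv]

lemma stack_apply_eq (C : Fin s → Matrix (Fin m) (Fin m) (ZMod 2))
    (u : Finset (Fin s)) (k : Fin s → ℕ) (d : Fin m → ZMod 2)
    (j : Fin s) (hj : j ∈ u) (t : ℕ) (htk : t < k j) (ht : t < m) :
    (stack C u k).mulVec d ⟨⟨j, hj⟩, ⟨t, htk⟩⟩ = (C j).mulVec d ⟨t, ht⟩ := by
  show stack C u k ⟨⟨j, hj⟩, ⟨t, htk⟩⟩ ⬝ᵥ d = (C j) ⟨t, ht⟩ ⬝ᵥ d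
  congr 1
  funext ℓ
  simp [stack, rowAt, ht]

lemma stack_mulVec_zero_iff (C : Fin s → Matrix (Fin m) (Fin m) (ZMod 2))
    (u : Finset (Fin s)) (k : Fin s → ℕ) (hk : ∀ j ∈ u, k j < m) (d : Fin m → ZMod 2) :
    (stack C u k).mulVec d = 0 ↔
      ∀ j ∈ u, ∀ ℓ : Fin m, ℓ.1 < k j → (C j).mulVec d ℓ = 0 := by
  constructor
  · intro h j hj ℓ hℓ
    have := congr_fun h ⟨⟨j, hj⟩, ⟨ℓ.1, hℓ⟩⟩
    rw [stack_apply_eq C u k d j hj ℓ.1 hℓ ℓ.2] at this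
    simpa using this
  · intro h
    funext p
    obtain ⟨⟨j, hj⟩, t⟩ := p
    have ht : t.1 < m := lt_trans t.2 (hk j hj)
    have := h j hj ⟨t.1, ht⟩ t.2
    rw [show (⟨⟨j, hj⟩, t⟩ : (j : {x // x ∈ u}) × Fin (k j.1)) = ⟨⟨j, hj⟩, ⟨t.1, t.2⟩⟩ from rfl,
      stack_apply_eq C u k d j hj t.1 t.2 ht]
    simpa using this

open Matrix in
lemma perp_iff_mem_span {ι : Type*} [Fintype ι] (A : Matrix ι (Fin m) (ZMod 2))
    (g : Fin m → ZMod 2) :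
    (∀ d, A.mulVec d = 0 → g ⬝ᵥ d = 0) ↔
      g ∈ Submodule.span (ZMod 2) (Set.range A) := by
  constructor
  · intro h
    classical
    set A' : Matrix (Option ι) (Fin m) (ZMod 2) := fun p => p.elim g A with hA'
    have hker : LinearMap.ker A'.mulVecLin = LinearMap.ker A.mulVecLin := by
      ext d
      simp only [LinearMap.mem_ker, Matrix.mulVecLin_apply]
      constructor
      · intro h0
        funext i
        exact congr_fun h0 (some i)
      · intro h0
        funext p
        cases p with
        | none => exact h d h0
        | some i => exact congr_fun h0 i
    have hr : A'.rank = A.rank := by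
      have h1 := LinearMap.finrank_range_add_finrank_ker A'.mulVecLin
      have h2 := LinearMap.finrank_range_add_finrank_ker A.mulVecLin
      rw [hker] at h1
      have e1 : A'.rank = Module.finrank (ZMod 2) (LinearMap.range A'.mulVecLin) := rfl
      have e2 : A.rank = Module.finrank (ZMod 2) (LinearMap.range A.mulVecLin) := rfl
      omega
    have hle : Submodule.span (ZMod 2) (Set.range A) ≤ Submodule.span (ZMod 2) (Set.range A') :=
      Submodule.span_mono (by rintro x ⟨i, rfl⟩; exact ⟨some i, rfl⟩)
    have heq : Submodule.span (ZMod 2) (Set.range A) = Submodule.span (ZMod 2) (Set.range A') := by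
      apply Submodule.eq_of_le_of_finrank_le hle
      exact (Matrix.rank_eq_finrank_span_row A').symm.trans_le (hr.trans_le (Matrix.rank_eq_finrank_span_row A).le)
    rw [heq]
    exact Submodule.subset_span ⟨none, rfl⟩
  · intro hg d hd
    induction hg using Submodule.span_induction with
    | mem x hx =>
      obtain ⟨i, rfl⟩ := hx
      exact congr_fun hd i
    | zero => exact zero_dotProduct d
    | add x y _ _ hx hy => rw [add_dotProduct, hx, hy, add_zero]
    | smul a x _ hx => rw [smul_dotProduct, hx, smul_zero]


lemma chi_zero : chi 0 = 1 := by simp [chi]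

lemma chi_add_one (x : ZMod 2) : chi (x + 1) = - chi x := by
  have h2 : (1 + 1 : ZMod 2) = 0 := by decide
  rcases zmod2_cases x with h | h <;> simp [h, h2, chi]

lemma prod_Nf_eq (C : Fin s → Matrix (Fin m) (Fin m) (ZMod 2)) (u : Finset (Fin s))
    (k : Fin s → ℕ) (hk : ∀ j ∈ u, k j < m) (i i' : ℕ) :
    (∏ j ∈ u, (Nf (pt C i j) (pt C i' j) (k j) : ℚ)) =
      (if (stack C u k).mulVec (bvec m i + bvec m i') = 0 then 1 else 0) *
        chi ((∑ j ∈ u, rowAt m (C j) (k j)) ⬝ᵥ (bvec m i + bvec m i')) := by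
  classical
  set d := bvec m i + bvec m i' with hd
  calc ∏ j ∈ u, (Nf (pt C i j) (pt C i' j) (k j) : ℚ)
      = ∏ j ∈ u, ((if ∀ ℓ : Fin m, ℓ.1 < k j → (C j).mulVec d ℓ = 0 then 1 else 0)
          * chi (rowAt m (C j) (k j) ⬝ᵥ d)) := by
        refine Finset.prod_congr rfl fun j hj => ?_
        exact Nf_pt C i i' j (k j) (hk j hj)
    _ = (∏ j ∈ u, if ∀ ℓ : Fin m, ℓ.1 < k j → (C j).mulVec d ℓ = 0 then (1:ℚ) else 0)
          * ∏ j ∈ u, chi (rowAt m (C j) (k j) ⬝ᵥ d) := Finset.prod_mul_distrib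
    _ = _ := by
        rw [Finset.prod_boole, ← chi_sum, ← sum_dot]
        congr 1
        by_cases hs : (stack C u k).mulVec d = 0
        · rw [if_pos hs, if_pos (fun j hj ℓ hℓ => (stack_mulVec_zero_iff C u k hk d).mp hs j hj ℓ hℓ)]
        · rw [if_neg hs, if_neg fun hcond => hs ((stack_mulVec_zero_iff C u k hk d).mpr hcond)]

lemma Gam_eq (C : Fin s → Matrix (Fin m) (Fin m) (ZMod 2)) (u : Finset (Fin s))
    (k : Fin s → ℕ) (hk : ∀ j ∈ u, k j < m) :
    Gam C u k = ∑ d : Fin m → ZMod 2,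
      (if (stack C u k).mulVec d = 0 then 1 else 0) *
        chi ((∑ j ∈ u, rowAt m (C j) (k j)) ⬝ᵥ d) := by
  classical
  set F : (Fin m → ZMod 2) → ℚ := fun d =>
    (if (stack C u k).mulVec d = 0 then 1 else 0) *
      chi ((∑ j ∈ u, rowAt m (C j) (k j)) ⬝ᵥ d) with hF
  have key : ∀ i i' : ℕ,
      (∏ j ∈ u, (Nf (pt C i j) (pt C i' j) (k j) : ℚ)) = F (bvec m i + bvec m i') :=
    fun i i' => prod_Nf_eq C u k hk i i'
  have h2 : ∀ i ∈ Finset.range (2 ^ m),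
      ∑ i' ∈ Finset.range (2 ^ m), F (bvec m i + bvec m i')
        = ∑ i' ∈ Finset.range (2 ^ m), F (bvec m i') := by
    intro i hi
    rw [Finset.mem_range] at hi
    refine Finset.sum_nbij' (fun i' => i ^^^ i') (fun i' => i ^^^ i') ?_ ?_ ?_ ?_ ?_
    · intro a ha
      rw [Finset.mem_range] at ha ⊢
      exact Nat.xor_lt_two_pow hi ha
    · intro a ha
      rw [Finset.mem_range] at ha ⊢
      exact Nat.xor_lt_two_pow hi ha
    · intro a _
      simp [← Nat.xor_assoc, Nat.xor_self]
    · intro a _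
      simp [← Nat.xor_assoc, Nat.xor_self]
    · intro a _
      rw [bvec_xor]
  have h3 : ∑ i' ∈ Finset.range (2 ^ m), F (bvec m i') = ∑ d : Fin m → ZMod 2, F d := by
    refine Finset.sum_nbij' (fun a => bvec m a) (fun v => natOf v) ?_ ?_ ?_ ?_ ?_
    · intro a _
      exact Finset.mem_univ _
    · intro v _
      rw [Finset.mem_range]
      exact natOf_lt v
    · intro a ha
      rw [Finset.mem_range] at ha
      exact natOf_bvec ha
    · intro v _
      exact bvec_natOf v
    · intro a _
      rfl
  rw [Gam]
  rw [Finset.sum_congr rfl fun i hi => Finset.sum_congr rfl fun i' _ => key i i']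
  rw [Finset.sum_congr rfl h2, Finset.sum_const, Finset.card_range, h3, nsmul_eq_mul]
  push_cast
  rw [← mul_assoc, inv_mul_cancel₀ (by positivity), one_mul]

lemma card_ker_eq (ι : Type*) [Fintype ι] [DecidableEq ι] (A : Matrix ι (Fin m) (ZMod 2)) :
    #{d ∈ (Finset.univ : Finset (Fin m → ZMod 2)) | A.mulVec d = 0} = 2 ^ (m - A.rank) := by
  classical
  rw [show #{d ∈ (Finset.univ : Finset (Fin m → ZMod 2)) | A.mulVec d = 0}
      = Fintype.card {d : Fin m → ZMod 2 // A.mulVec d = 0} from (Fintype.card_subtype _).symm]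
  haveI : Fintype (LinearMap.ker A.mulVecLin) := Fintype.ofFinite _
  have hequiv : {d : Fin m → ZMod 2 // A.mulVec d = 0} ≃ LinearMap.ker A.mulVecLin :=
    Equiv.subtypeEquivRight fun d => by
      simp [LinearMap.mem_ker, Matrix.mulVecLin_apply]
  rw [Fintype.card_congr hequiv]
  have hcard := Module.card_eq_pow_finrank (K := ZMod 2) (V := LinearMap.ker A.mulVecLin)
  rw [hcard, ZMod.card 2]
  congr 1
  have h2 := LinearMap.finrank_range_add_finrank_ker A.mulVecLin
  have e2 : A.rank = Module.finrank (ZMod 2) (LinearMap.range A.mulVecLin) := rfl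
  have e3 : Module.finrank (ZMod 2) (Fin m → ZMod 2) = m := Module.finrank_fin_fun (ZMod 2)
  have e4 : A.rank ≤ m := le_trans (Matrix.rank_le_card_width A) (le_of_eq (Fintype.card_fin m))
  omega

end GainAux

open GainAux Matrix

theorem statement (m s : ℕ) (hm : 1 ≤ m) (hs : 1 ≤ s)
    (C : Fin s → Matrix (Fin m) (Fin m) (ZMod 2))
    (u : Finset (Fin s)) (hu : u.Nonempty)
    (k : Fin s → ℕ) (hk : ∀ j ∈ u, k j ≤ m - 1) :
    Gam C u k = (2 : ℚ) ^ (m - (stack C u k).rank) ↔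
      (∑ j ∈ u, rowAt m (C j) (k j)) ∈
        Submodule.span (ZMod 2) (Set.range (fun p => stack C u k p)) := by
  classical
  have hkm : ∀ j ∈ u, k j < m := fun j hj => by have := hk j hj; omega
  set A := stack C u k with hA
  set g : Fin m → ZMod 2 := ∑ j ∈ u, rowAt m (C j) (k j) with hg
  have hrange : (Set.range fun p => A p) = Set.range A := rfl
  have hGam := Gam_eq C u k hkm
  by_cases hperp : ∀ d, A.mulVec d = 0 → g ⬝ᵥ d = 0
  · have hmem : g ∈ Submodule.span (ZMod 2) (Set.range A) := (perp_iff_mem_span A g).mp hperp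
    have hGam2 : Gam C u k = (2:ℚ) ^ (m - A.rank) := by
      rw [hGam]
      have hsum : ∀ d : Fin m → ZMod 2,
          (if A.mulVec d = 0 then (1:ℚ) else 0) * chi (g ⬝ᵥ d)
            = (if A.mulVec d = 0 then 1 else 0) := by
        intro d
        by_cases h0 : A.mulVec d = 0
        · rw [if_pos h0, hperp d h0, chi_zero, mul_one]
        · rw [if_neg h0, zero_mul]
      rw [Finset.sum_congr rfl fun d _ => hsum d, Finset.sum_boole, card_ker_eq _ A]
      push_cast
      ring
    rw [hGam2, hrange]
    exact iff_of_true rfl hmem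
  · push_neg at hperp
    obtain ⟨d₀, hd₀ker, hd₀g⟩ := hperp
    have hgd1 : g ⬝ᵥ d₀ = 1 := by
      rcases zmod2_cases (g ⬝ᵥ d₀) with h | h
      · exact absurd h hd₀g
      · exact h
    set F : (Fin m → ZMod 2) → ℚ := fun d =>
      (if A.mulVec d = 0 then 1 else 0) * chi (g ⬝ᵥ d) with hF
    have hflip : ∀ d, F (d + d₀) = - F d := by
      intro d
      have hAd : A.mulVec (d + d₀) = A.mulVec d := by
        rw [Matrix.mulVec_add, hd₀ker, add_zero]
      have hgd : g ⬝ᵥ (d + d₀) = g ⬝ᵥ d + 1 := by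
        rw [dotProduct_add, hgd1]
      rw [hF]
      simp only [hAd, hgd, chi_add_one, mul_neg]
    have hS : ∑ d : Fin m → ZMod 2, F d = 0 := by
      have h1 : ∑ d : Fin m → ZMod 2, F (d + d₀) = ∑ d : Fin m → ZMod 2, F d :=
        Fintype.sum_equiv (Equiv.addRight d₀) _ _ fun d => rfl
      have h2 : ∑ d : Fin m → ZMod 2, F (d + d₀) = - ∑ d : Fin m → ZMod 2, F d := by
        rw [Finset.sum_congr rfl fun d _ => hflip d, Finset.sum_neg_distrib]
      have := h1.symm.trans h2
      linarith
    have hGam0 : Gam C u k = 0 := by rw [hGam]; exact hS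
    have h2pos : (0:ℚ) < 2 ^ (m - A.rank) := by positivity
    refine iff_of_false ?_ ?_
    · rw [hGam0]
      intro h
      exact absurd h.symm (ne_of_gt h2pos)
    · intro hmem
      rw [hrange] at hmem
      exact hd₀g ((perp_iff_mem_span A g).mpr hmem d₀ hd₀ker)


end
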